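/- Let $A \subseteq S^2 T^*$ be a linear system of quadratic forms on a complex vector space $T$, and let $q \in A$ be a generic element (i.e. of maximal rank among elements of $A$). Then the singular locus of $q$ (the kernel of its associated bilinear form) is contained in the common zero locus of all quadrics in $A$: for every $v$ with $q(v,\cdot) \equiv 0$ and every $q' \in A$, one has $q'(v,v) = 0$. -/

import Mathlib

open Module LinearMap Polynomial

lemma aux_restrict {T : Type*} [AddCommGroup T] [Module ℂ T] [FiniteDimensional ℂ T]
    (E : T →ₗ[ℂ] T →ₗ[ℂ] ℂ) (U : Submodule ℂ T)
    (h : (LinearMap.BilinForm.restrict E U).Nondegenerate) :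
    finrank ℂ U ≤ finrank ℂ (LinearMap.range E) := by
  have hinj : Function.Injective (E.domRestrict U) := by
    rw [← LinearMap.ker_eq_bot, LinearMap.ker_eq_bot']
    intro u hu
    exact h.1 u fun w => by
      have := congrFun (congrArg DFunLike.coe hu) (w : T)
      simpa [LinearMap.BilinForm.restrict_apply] using this
  have h1 : finrank ℂ U = finrank ℂ (LinearMap.range (E.domRestrict U)) :=
    (LinearMap.finrank_range_of_inj hinj).symm
  rw [h1]
  apply Submodule.finrank_mono
  rintro - ⟨u, rfl⟩
  exact ⟨(u : T), rfl⟩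

lemma aux_rank {T : Type*} [AddCommGroup T] [Module ℂ T] [FiniteDimensional ℂ T]
    (B : T →ₗ[ℂ] T →ₗ[ℂ] ℂ) (hs : ∀ x y, B x y = B y x) (v : T) (hδ : B v v ≠ 0) :
    finrank ℂ (LinearMap.range (B - (B v v)⁻¹ • ((B v).smulRight (B v)))) + 1
      ≤ finrank ℂ (LinearMap.range B) := by
  set C := B - (B v v)⁻¹ • ((B v).smulRight (B v)) with hC
  have hvne : v ≠ 0 := by rintro rfl; simp at hδ
  have hvker : v ∉ LinearMap.ker B := by
    intro h
    rw [LinearMap.mem_ker] at h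
    apply hδ; rw [h]; rfl
  have h1 : LinearMap.ker B ⊔ Submodule.span ℂ {v} ≤ LinearMap.ker C := by
    apply sup_le
    · intro x hx
      rw [LinearMap.mem_ker] at hx ⊢
      have hxv : B v x = 0 := by rw [← hs x v, hx]; rfl
      simp [hC, hx, hxv]
    · rw [Submodule.span_le, Set.singleton_subset_iff]
      have : C v = B v - ((B v v)⁻¹ * B v v) • B v := by
        simp [hC, smul_smul]
      rw [SetLike.mem_coe, LinearMap.mem_ker, this, inv_mul_cancel₀ hδ, one_smul, sub_self]
  have hdisj : LinearMap.ker B ⊓ Submodule.span ℂ {v} = ⊥ := by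
    rw [← disjoint_iff]
    exact (Submodule.disjoint_span_singleton' hvne).mpr hvker
  have h2 : finrank ℂ (LinearMap.ker B ⊔ Submodule.span ℂ {v} : Submodule ℂ T)
      = finrank ℂ (LinearMap.ker B) + 1 := by
    have := Submodule.finrank_sup_add_finrank_inf_eq (LinearMap.ker B) (Submodule.span ℂ {v})
    rw [hdisj, finrank_span_singleton hvne] at this
    simpa using this
  have h3 : finrank ℂ (LinearMap.ker B) + 1 ≤ finrank ℂ (LinearMap.ker C) := by
    rw [← h2]; exact Submodule.finrank_mono h1
  have h4 := LinearMap.finrank_range_add_finrank_ker B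
  have h5 := LinearMap.finrank_range_add_finrank_ker C
  omega

/-- **Bertini-type statement for linear systems of quadrics.**  Let `A` be a linear system of
quadratic (symmetric bilinear) forms on a complex vector space `T`, and let `q ∈ A` be a
generic element, i.e. of maximal rank among the elements of `A`.  Then the singular locus of
`q` is contained in the common zero locus of all quadrics of `A`: if `q(v,·) ≡ 0` then
`q'(v,v) = 0` for every `q' ∈ A`. -/
theorem bertini_for_quadrics
    {T : Type*} [AddCommGroup T] [Module ℂ T] [FiniteDimensional ℂ T]
    (A : Submodule ℂ (T →ₗ[ℂ] T →ₗ[ℂ] ℂ))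
    (hsymm : ∀ q ∈ A, ∀ x y : T, q x y = q y x)
    (q : T →ₗ[ℂ] T →ₗ[ℂ] ℂ) (hq : q ∈ A)
    (hmax : ∀ q' ∈ A,
      Module.finrank ℂ (LinearMap.range q') ≤ Module.finrank ℂ (LinearMap.range q))
    (v : T) (hv : q v = 0) :
    ∀ q' ∈ A, q' v v = 0 := by
  intro q' hq'
  by_contra hγ
  set γ := q' v v with hγdef
  -- a complement of the kernel of q
  obtain ⟨U, hU⟩ := Submodule.exists_isCompl (LinearMap.ker q)
  have hUrank : finrank ℂ U = finrank ℂ (LinearMap.range q) := by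
    have h1 := Submodule.finrank_add_eq_of_isCompl hU
    have h2 := LinearMap.finrank_range_add_finrank_ker q
    omega
  -- q restricted to U is nondegenerate
  have hqU : (LinearMap.BilinForm.restrict q U).Nondegenerate := by
    refine LinearMap.BilinForm.Nondegenerate.ofSeparatingLeft ?_
    intro u hu
    have huk : (u : T) ∈ LinearMap.ker q := by
      rw [LinearMap.mem_ker]
      ext x
      have hx : x ∈ LinearMap.ker q ⊔ U := by rw [hU.sup_eq_top]; trivial
      obtain ⟨k, hk, w, hw, rfl⟩ := Submodule.mem_sup.mp hx
      have hk0 : q (u : T) k = 0 := by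
        rw [hsymm q hq (u : T) k, LinearMap.mem_ker.mp hk]; rfl
      have hw0 : q (u : T) w = 0 := by
        have := hu ⟨w, hw⟩
        simpa [LinearMap.BilinForm.restrict_apply] using this
      simp [hk0, hw0]
    have : (u : T) ∈ LinearMap.ker q ⊓ U := ⟨huk, u.2⟩
    rw [hU.inf_eq_bot] at this
    exact Subtype.ext this
  -- the corrected form D
  set D := q' - γ⁻¹ • ((q' v).smulRight (q' v)) with hD
  have hDsymm : ∀ x y, D x y = D y x := by
    intro x y
    simp only [hD, LinearMap.sub_apply, LinearMap.smul_apply, LinearMap.smulRight_apply,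
      smul_eq_mul]
    rw [hsymm q' hq' x y]; ring
  -- matrices over polynomials
  set b := Module.finBasis ℂ U with hb
  set Mq := BilinForm.toMatrix b (LinearMap.BilinForm.restrict q U) with hMq
  set MD := BilinForm.toMatrix b (LinearMap.BilinForm.restrict D U) with hMD
  set P : Matrix (Fin (finrank ℂ U)) (Fin (finrank ℂ U)) ℂ[X] :=
    Mq.map Polynomial.C + (X : ℂ[X]) • MD.map Polynomial.C with hP
  have hPt : ∀ t : ℂ, P.map (Polynomial.evalRingHom t) = Mq + t • MD := by
    intro t
    ext i j
    simp only [hP, Matrix.map_apply, Matrix.add_apply, Matrix.smul_apply,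
      Polynomial.coe_evalRingHom, Polynomial.eval_add, Polynomial.eval_mul, Polynomial.eval_C,
      Polynomial.eval_X, smul_eq_mul, Polynomial.eval_smul]
  have hMqdet : Mq.det ≠ 0 :=
    (LinearMap.BilinForm.nondegenerate_iff_det_ne_zero b).mp hqU
  have hPdet : P.det ≠ 0 := by
    intro h
    apply hMqdet
    have h2 := (Polynomial.evalRingHom 0).map_det P
    rw [RingHom.mapMatrix_apply, hPt 0, h, map_zero] at h2
    simpa using h2.symm
  -- pick a good parameter t
  obtain ⟨t, ht⟩ := Infinite.exists_notMem_finset (P.det * X).roots.toFinset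
  have hPX : (P.det * X) ≠ 0 := mul_ne_zero hPdet X_ne_zero
  have ht0 : t ≠ 0 := by
    rintro rfl
    exact ht (Multiset.mem_toFinset.mpr ((Polynomial.mem_roots hPX).mpr (by simp [Polynomial.IsRoot])))
  have htroot : Polynomial.eval t P.det ≠ 0 := by
    intro h
    exact ht (Multiset.mem_toFinset.mpr ((Polynomial.mem_roots hPX).mpr (by simp [Polynomial.IsRoot, h])))
  -- (q + t D) restricted to U is nondegenerate, so its rank is ≥ finrank U
  have hqtD : (LinearMap.BilinForm.restrict (q + t • D) U).Nondegenerate := by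
    apply (LinearMap.BilinForm.nondegenerate_iff_det_ne_zero b).mpr
    have : LinearMap.BilinForm.toMatrix b (LinearMap.BilinForm.restrict (q + t • D) U)
        = Mq + t • MD := by
      ext i j
      simp [hMq, hMD, BilinForm.toMatrix_apply, _root_.BilinForm.toMatrix]
    have h2 := (Polynomial.evalRingHom t).map_det P
    rw [RingHom.mapMatrix_apply, hPt t] at h2
    rw [this, ← h2]
    simpa using htroot
  have hrank1 : finrank ℂ U ≤ finrank ℂ (LinearMap.range (q + t • D)) :=
    aux_restrict _ U hqtD
  -- the pencil element B_t
  set Bt := q + t • q' with hBt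
  have hBtA : Bt ∈ A := A.add_mem hq (A.smul_mem t hq')
  have hBtsymm : ∀ x y, Bt x y = Bt y x := by
    intro x y
    simp only [hBt, LinearMap.add_apply, LinearMap.smul_apply, smul_eq_mul]
    rw [hsymm q hq x y, hsymm q' hq' x y]
  have hBtv : Bt v = t • q' v := by
    simp [hBt, hv]
  have hBtvv : Bt v v ≠ 0 := by
    rw [hBtv]
    simp only [LinearMap.smul_apply, smul_eq_mul]
    exact mul_ne_zero ht0 hγ
  -- the key algebraic identity
  have hkey : Bt - (Bt v v)⁻¹ • ((Bt v).smulRight (Bt v)) = q + t • D := by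
    ext x y
    have hBtvv' : Bt v v = t * γ := by rw [hBtv]; simp [hγdef]
    simp only [LinearMap.sub_apply, LinearMap.add_apply, LinearMap.smul_apply,
      LinearMap.smulRight_apply, smul_eq_mul, hBtvv', hBtv, hBt, hD]
    simp only [hv, LinearMap.zero_apply, zero_mul, mul_zero, add_zero, sub_zero, ← hγdef]
    field_simp
    ring
  have hrank2 := aux_rank Bt hBtsymm v hBtvv
  rw [hkey] at hrank2
  have hrank3 := hmax Bt hBtA
  rw [← hUrank] at hrank3
  omega
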